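/- arXiv:2303.01472 — 6 statements merged into one kernel-verified Lean document; each statement's English description precedes it below -/
import Mathlib

section
/- Let H be a real Hilbert space, let a : H × H → ℝ be a bounded bilinear form with boundedness constant ‖a‖ (i.e. |a(x,y)| ≤ ‖a‖·‖x‖·‖y‖ for all x,y ∈ H) which is H-elliptic with constant α > 0 (i.e. a(v,v) ≥ α‖v‖² for all v ∈ H), and let F : H → ℝ be a bounded linear functional. Let H_h be a subspace of H and let a_h : H × H → ℝ be a bounded bilinear form with boundedness constant ‖a_h‖ such that a_h(v_h, v_h) ≥ α̃‖v_h‖² for all v_h ∈ H_h, where α̃ > 0. Let u ∈ H satisfy a(u,v) = F(v) for all v ∈ H and let u_h ∈ H_h satisfy a_h(u_h, v_h) = F(v_h) for all v_h ∈ H_h. If D ≥ 0 is any constant such that |a(u, v_h) − a_h(u, v_h)| ≤ D‖v_h‖ for all v_h ∈ H_h, then for every w_h ∈ H_h there holds ‖u − u_h‖ ≤ (1 + 2‖a‖/α̃ + ‖a_h‖/α̃)·‖u − w_h‖ + (1/α̃)·D. -/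
/-- Strang-type lemma (Lemma 5.1 of the paper): abstract error estimate for a
nonconforming Galerkin approximation in a real Hilbert space. -/
theorem strang_lemma
    {H : Type*} [NormedAddCommGroup H] [InnerProductSpace ℝ H] [CompleteSpace H]
    (a ah : H →ₗ[ℝ] H →ₗ[ℝ] ℝ) (Ca Cah α αt : ℝ) (hα : 0 < α) (hαt : 0 < αt)
    (ha_bdd : ∀ x y : H, |a x y| ≤ Ca * ‖x‖ * ‖y‖)
    (ha_ell : ∀ v : H, α * ‖v‖ ^ 2 ≤ a v v)
    (Hh : Submodule ℝ H)
    (hah_bdd : ∀ x y : H, |ah x y| ≤ Cah * ‖x‖ * ‖y‖)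
    (hah_ell : ∀ v ∈ Hh, αt * ‖v‖ ^ 2 ≤ ah v v)
    (F : H →L[ℝ] ℝ)
    (u : H) (hu : ∀ v : H, a u v = F v)
    (uh : H) (huh_mem : uh ∈ Hh) (huh : ∀ v ∈ Hh, ah uh v = F v)
    (D : ℝ) (hD : 0 ≤ D)
    (hconsist : ∀ v ∈ Hh, |a u v - ah u v| ≤ D * ‖v‖)
    (wh : H) (hwh : wh ∈ Hh) :
    ‖u - uh‖ ≤ (1 + 2 * Ca / αt + Cah / αt) * ‖u - wh‖ + (1 / αt) * D := by
  set e := uh - wh with he_def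
  have heHh : e ∈ Hh := Hh.sub_mem huh_mem hwh
  have h1 : αt * ‖e‖ ^ 2 ≤ ah e e := hah_ell e heHh
  have h2 : ah e e = (a u e - ah u e) + ah (u - wh) e := by
    have hF := huh e heHh
    have hu' := hu e
    simp only [he_def, map_sub, LinearMap.sub_apply] at *
    linarith
  have hcons := abs_le.mp (hconsist e heHh)
  have hb := abs_le.mp (hah_bdd (u - wh) e)
  have h3 : αt * ‖e‖ ^ 2 ≤ D * ‖e‖ + Cah * ‖u - wh‖ * ‖e‖ := by
    rw [h2] at h1; linarith [hcons.2, hb.2]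
  -- nonnegativity facts
  have hCah : 0 ≤ Cah * ‖u - wh‖ := by
    rcases eq_or_lt_of_le (norm_nonneg (u - wh)) with h | h
    · rw [← h]; simp
    · have := (abs_nonneg (ah (u - wh) (u - wh))).trans (hah_bdd (u - wh) (u - wh))
      nlinarith
  have hCa : 0 ≤ Ca * ‖u - wh‖ := by
    rcases eq_or_lt_of_le (norm_nonneg (u - wh)) with h | h
    · rw [← h]; simp
    · have h1 := ha_ell (u - wh)
      have h2 := (le_abs_self (a (u - wh) (u - wh))).trans (ha_bdd (u - wh) (u - wh))
      nlinarith
  have h4 : αt * ‖e‖ ≤ D + Cah * ‖u - wh‖ := by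
    rcases eq_or_lt_of_le (norm_nonneg e) with h | h
    · rw [← h]; simpa using by linarith
    · nlinarith
  have hub : ‖u - uh‖ ≤ ‖u - wh‖ + ‖e‖ := by
    have : u - uh = (u - wh) - e := by rw [he_def]; abel
    rw [this]; exact norm_sub_le _ _
  have hrhs : (1 + 2 * Ca / αt + Cah / αt) * ‖u - wh‖ + (1 / αt) * D
      = (αt * ‖u - wh‖ + 2 * (Ca * ‖u - wh‖) + Cah * ‖u - wh‖ + D) / αt := by
    field_simp
  rw [hrhs, le_div_iff₀ hαt]
  nlinarith
end

section
/- For every real number p > 2 and every dimension d ≥ 1 there exists a constant c_p > 0, depending only on p and independent of z and y, such that for all z, y ∈ ℝ^d: ‖ ‖z‖^{p−2}·z − ‖y‖^{p−2}·y ‖ ≤ c_p·(‖z‖ + ‖y‖)^{p−2}·‖z − y‖. -/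
lemma rpow_sub_rpow_le_aux (q : ℝ) (hq : 0 < q) {a b : ℝ} (hb : 0 < b) (hba : b ≤ a) :
    a ^ q - b ^ q ≤ q * (a ^ (q - 1) + b ^ (q - 1)) * (a - b) := by
  have ha : 0 < a := hb.trans_le hba
  have hderiv : ∀ x ∈ Set.Icc b a,
      HasDerivWithinAt (fun x : ℝ => x ^ q) (q * x ^ (q - 1)) (Set.Icc b a) x := by
    intro x hx
    have hx0 : x ≠ 0 := (hb.trans_le hx.1).ne'
    simpa [mul_comm] using (Real.hasDerivAt_rpow_const (Or.inl hx0)).hasDerivWithinAt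
  have hbound : ∀ x ∈ Set.Icc b a, ‖q * x ^ (q - 1)‖ ≤ q * (a ^ (q - 1) + b ^ (q - 1)) := by
    intro x hx
    have hx0 : 0 < x := hb.trans_le hx.1
    rw [Real.norm_eq_abs, abs_of_nonneg (by positivity)]
    have hxs : x ^ (q - 1) ≤ a ^ (q - 1) + b ^ (q - 1) := by
      rcases le_or_gt 1 q with h1 | h1
      · have : x ^ (q - 1) ≤ a ^ (q - 1) :=
          Real.rpow_le_rpow hx0.le hx.2 (by linarith)
        have hb' : (0:ℝ) ≤ b ^ (q - 1) := Real.rpow_nonneg hb.le _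
        linarith
      · have : x ^ (q - 1) ≤ b ^ (q - 1) :=
          Real.rpow_le_rpow_of_nonpos hb hx.1 (by linarith)
        have ha' : (0:ℝ) ≤ a ^ (q - 1) := Real.rpow_nonneg ha.le _
        linarith
    exact mul_le_mul_of_nonneg_left hxs hq.le
  have := Convex.norm_image_sub_le_of_norm_hasDerivWithin_le hderiv hbound (convex_Icc b a)
    (Set.left_mem_Icc.2 hba) (Set.right_mem_Icc.2 hba)
  rw [Real.norm_eq_abs, Real.norm_eq_abs, abs_of_nonneg (sub_nonneg.2 hba)] at this
  calc a ^ q - b ^ q ≤ |a ^ q - b ^ q| := le_abs_self _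
    _ ≤ q * (a ^ (q - 1) + b ^ (q - 1)) * (a - b) := this

lemma power_vector_ineq_aux (p : ℝ) (hp : 2 < p) (d : ℕ)
    (z y : EuclideanSpace ℝ (Fin d)) (hzy : ‖y‖ ≤ ‖z‖) :
    ‖(‖z‖ ^ (p - 2)) • z - (‖y‖ ^ (p - 2)) • y‖ ≤
      (1 + (p - 2) * ((2:ℝ) ^ (p - 3) + 2 ^ (3 - p) + 1)) * (‖z‖ + ‖y‖) ^ (p - 2) * ‖z - y‖ := by
  set q : ℝ := p - 2 with hqdef
  have hq : 0 < q := by simp [hqdef]; linarith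
  set a := ‖z‖ with hadef
  set b := ‖y‖ with hbdef
  have ha0 : 0 ≤ a := norm_nonneg _
  have hb0 : 0 ≤ b := norm_nonneg _
  have hab : |a - b| ≤ ‖z - y‖ := abs_norm_sub_norm_le _ _
  have hK : (2:ℝ) ^ (p - 3) + 2 ^ (3 - p) + 1 = 2 ^ (q - 1) + 2 ^ (1 - q) + 1 := by
    norm_num [hqdef]; ring_nf
  rw [hK]
  set K : ℝ := (2:ℝ) ^ (q - 1) + 2 ^ (1 - q) with hKdef
  have hK1 : 1 ≤ K := by
    have h1 : (0:ℝ) < 2 ^ (q - 1) := Real.rpow_pos_of_pos two_pos _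
    have h2 : (0:ℝ) < 2 ^ (1 - q) := Real.rpow_pos_of_pos two_pos _
    have : 1 ≤ (2:ℝ) ^ (q - 1) ∨ 1 ≤ (2:ℝ) ^ (1 - q) := by
      rcases le_or_gt 1 q with h | h
      · left; exact Real.one_le_rpow one_le_two (by linarith)
      · right; exact Real.one_le_rpow one_le_two (by linarith)
    rcases this with h | h <;> linarith
  -- decomposition
  have hdecomp : (a ^ q) • z - (b ^ q) • y = (a ^ q) • (z - y) + (a ^ q - b ^ q) • y := by
    rw [smul_sub, sub_smul]; abel
  have hnorm : ‖(a ^ q) • z - (b ^ q) • y‖ ≤ a ^ q * ‖z - y‖ + (a ^ q - b ^ q) * b := by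
    rw [hdecomp]
    refine (norm_add_le _ _).trans ?_
    rw [norm_smul, norm_smul, Real.norm_eq_abs, Real.norm_eq_abs,
      abs_of_nonneg (Real.rpow_nonneg ha0 _),
      abs_of_nonneg (by
        have := Real.rpow_le_rpow hb0 hzy hq.le
        linarith)]
  have h1 : a ^ q ≤ (a + b) ^ q := Real.rpow_le_rpow ha0 (by linarith) hq.le
  have habsub : a - b ≤ ‖z - y‖ := (le_abs_self _).trans hab
  have hsum0 : 0 ≤ (a + b) ^ q := Real.rpow_nonneg (by linarith) _
  have h2 : (a ^ q - b ^ q) * b ≤ q * (K + 1) * ((a + b) ^ q) * ‖z - y‖ := by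
    rcases eq_or_lt_of_le hb0 with hb | hb
    · rw [← hb, mul_zero]
      positivity
    · have hkey := rpow_sub_rpow_le_aux q hq hb hzy
      have haK : a ^ (q - 1) ≤ K * (a + b) ^ (q - 1) := by
        have ha : 0 < a := hb.trans_le hzy
        rcases le_or_gt 1 q with hq1 | hq1
        · have : a ^ (q - 1) ≤ (a + b) ^ (q - 1) :=
            Real.rpow_le_rpow ha0 (by linarith) (by linarith)
          have hpos : (0:ℝ) ≤ (a + b) ^ (q - 1) := Real.rpow_nonneg (by linarith) _
          nlinarith
        · have h2a : (a + b) ≤ 2 * a := by linarith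
          have : (2 * a) ^ (q - 1) ≤ (a + b) ^ (q - 1) :=
            Real.rpow_le_rpow_of_nonpos (by linarith) h2a (by linarith)
          rw [Real.mul_rpow (by norm_num) ha0] at this
          have h2q : (0:ℝ) < 2 ^ (q - 1) := Real.rpow_pos_of_pos two_pos _
          have h2q' : (2:ℝ) ^ (1 - q) * 2 ^ (q - 1) = 1 := by
            rw [← Real.rpow_add two_pos]; norm_num
          have hpow : a ^ (q - 1) = 2 ^ (1 - q) * (2 ^ (q - 1) * a ^ (q - 1)) := by
            rw [← mul_assoc, h2q', one_mul]
          rw [hpow]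
          have h2q'' : (0:ℝ) < 2 ^ (1 - q) := Real.rpow_pos_of_pos two_pos _
          have hKge : (2:ℝ) ^ (1 - q) ≤ K := by
            have : (0:ℝ) < 2 ^ (q - 1) := h2q
            simp only [hKdef]; linarith
          have hstep : (2:ℝ) ^ (1 - q) * (2 ^ (q - 1) * a ^ (q - 1)) ≤
              2 ^ (1 - q) * (a + b) ^ (q - 1) := by
            exact mul_le_mul_of_nonneg_left this h2q''.le
          refine hstep.trans ?_
          have hpos : (0:ℝ) ≤ (a + b) ^ (q - 1) := Real.rpow_nonneg (by linarith) _
          exact mul_le_mul_of_nonneg_right hKge hpos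
      -- b * a^(q-1) ≤ K (a+b)^q,  b * b^(q-1) = b^q ≤ (a+b)^q
      have hsum_pos : (0:ℝ) < a + b := by have := hb.trans_le hzy; linarith
      have hba' : b * a ^ (q - 1) ≤ K * (a + b) ^ q := by
        have h1' : b * a ^ (q - 1) ≤ (a + b) * (K * (a + b) ^ (q - 1)) := by
          have hap : (0:ℝ) ≤ a ^ (q - 1) := Real.rpow_nonneg ((hb0.trans hzy) : (0:ℝ) ≤ a) _
          have : b ≤ a + b := by linarith
          exact mul_le_mul this haK hap (by linarith)
        have : (a + b) * (K * (a + b) ^ (q - 1)) = K * (a + b) ^ q := by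
          rw [mul_comm (a+b), mul_assoc, ← Real.rpow_add_one hsum_pos.ne']
          ring_nf
        linarith
      have hbb : b * b ^ (q - 1) ≤ (a + b) ^ q := by
        rw [mul_comm, ← Real.rpow_add_one hb.ne']
        have : b ^ (q - 1 + 1) = b ^ q := by norm_num
        rw [this]
        exact Real.rpow_le_rpow hb0 (by linarith) hq.le
      have hdiff0 : 0 ≤ a - b := by linarith
      have hzy0 : (0:ℝ) ≤ ‖z - y‖ := norm_nonneg _
      calc (a ^ q - b ^ q) * b ≤ (q * (a ^ (q - 1) + b ^ (q - 1)) * (a - b)) * b := by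
            apply mul_le_mul_of_nonneg_right hkey hb0
        _ = q * (b * a ^ (q - 1) + b * b ^ (q - 1)) * (a - b) := by ring
        _ ≤ q * (K * (a + b) ^ q + (a + b) ^ q) * (a - b) := by
            apply mul_le_mul_of_nonneg_right _ hdiff0
            apply mul_le_mul_of_nonneg_left _ hq.le
            linarith
        _ = q * (K + 1) * (a + b) ^ q * (a - b) := by ring
        _ ≤ q * (K + 1) * (a + b) ^ q * ‖z - y‖ := by
            apply mul_le_mul_of_nonneg_left habsub
            positivity
  have hzy0 : (0:ℝ) ≤ ‖z - y‖ := norm_nonneg _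
  calc ‖(a ^ q) • z - (b ^ q) • y‖ ≤ a ^ q * ‖z - y‖ + (a ^ q - b ^ q) * b := hnorm
    _ ≤ (a + b) ^ q * ‖z - y‖ + q * (K + 1) * (a + b) ^ q * ‖z - y‖ := by
        have := mul_le_mul_of_nonneg_right h1 hzy0
        linarith
    _ = (1 + q * (K + 1)) * (a + b) ^ q * ‖z - y‖ := by ring

/-- For every real `p > 2` there is a constant `c_p > 0`, depending only on `p`
(and independent of `z` and `y`), such that for every dimension `d ≥ 1` and all
`z, y ∈ ℝ^d`: `‖ ‖z‖^(p-2) • z − ‖y‖^(p-2) • y ‖ ≤ c_p (‖z‖+‖y‖)^(p-2) ‖z−y‖`. -/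
theorem power_vector_ineq (p : ℝ) (hp : 2 < p) :
    ∃ c : ℝ, 0 < c ∧ ∀ (d : ℕ), 1 ≤ d → ∀ z y : EuclideanSpace ℝ (Fin d),
      ‖(‖z‖ ^ (p - 2)) • z - (‖y‖ ^ (p - 2)) • y‖ ≤
        c * (‖z‖ + ‖y‖) ^ (p - 2) * ‖z - y‖ := by
  refine ⟨1 + (p - 2) * ((2:ℝ) ^ (p - 3) + 2 ^ (3 - p) + 1), ?_, ?_⟩
  · have h1 : (0:ℝ) < 2 ^ (p - 3) := Real.rpow_pos_of_pos two_pos _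
    have h2 : (0:ℝ) < 2 ^ (3 - p) := Real.rpow_pos_of_pos two_pos _
    nlinarith
  · intro d _ z y
    rcases le_total ‖y‖ ‖z‖ with h | h
    · exact power_vector_ineq_aux p hp d z y h
    · have := power_vector_ineq_aux p hp d y z h
      rw [norm_sub_rev, norm_sub_rev y z, add_comm ‖y‖] at this
      exact this
end

section
/- Let d ≥ 1, let p ∈ [3,4] and set q := 2(p−1). There exists a constant C > 0 depending only on p such that for every measure μ on a measurable space Ω, all w, w̃, z : Ω → ℝ^d belonging to L^q(μ), and all g : Ω → ℝ^d belonging to L²(μ), the function x ↦ (‖w(x)‖^{p−2} − ‖w̃(x)‖^{p−2})·(z(x)·g(x)) is μ-integrable and | ∫_Ω (‖w‖^{p−2} − ‖w̃‖^{p−2})·(z·g) dμ | ≤ C·(‖w‖_{L^q(μ)} + ‖w̃‖_{L^q(μ)})^{p−3} · ‖w − w̃‖_{L^q(μ)} · ‖z‖_{L^q(μ)} · ‖g‖_{L²(μ)}. -/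
open MeasureTheory

universe u

lemma rpow_diff_le {s : ℝ} (hs : 1 ≤ s) {a b : ℝ} (ha : 0 ≤ a) (hb : 0 ≤ b) :
    |a ^ s - b ^ s| ≤ s * (a + b) ^ (s - 1) * |a - b| := by
  wlog hab : b ≤ a generalizing a b
  · have h := this hb ha (le_of_not_ge hab)
    rwa [abs_sub_comm, abs_sub_comm b a, add_comm] at h
  have hs0 : (0:ℝ) < s := by linarith
  have hs1 : 0 ≤ s - 1 := by linarith
  have key : ‖a ^ s - b ^ s‖ ≤ s * a ^ (s - 1) * ‖a - b‖ := by
    refine (convex_Icc (0:ℝ) a).norm_image_sub_le_of_norm_hasDerivWithin_le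
      (f := fun t => t ^ s) (f' := fun t => s * t ^ (s - 1)) ?_ ?_ ?_ ?_
    · intro t _
      exact (Real.hasDerivAt_rpow_const (Or.inr hs)).hasDerivWithinAt
    · intro t ht
      rw [Real.norm_eq_abs, abs_mul, abs_of_nonneg hs0.le,
        abs_of_nonneg (Real.rpow_nonneg ht.1 _)]
      exact mul_le_mul_of_nonneg_left (Real.rpow_le_rpow ht.1 ht.2 hs1) hs0.le
    · exact ⟨hb, hab⟩
    · exact ⟨ha, le_refl a⟩
  calc |a ^ s - b ^ s| ≤ s * a ^ (s - 1) * |a - b| := key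
    _ ≤ s * (a + b) ^ (s - 1) * |a - b| := by
        have h1 : a ^ (s-1) ≤ (a+b) ^ (s-1) :=
          Real.rpow_le_rpow ha (by linarith) hs1
        have h2 := mul_le_mul_of_nonneg_left h1 hs0.le
        exact mul_le_mul_of_nonneg_right h2 (abs_nonneg _)

/-- For `d ≥ 1`, `p ∈ [3,4]` and `q := 2(p−1)`, there is `C > 0` depending only on `p`
such that for every measure `μ`, all `w, w̃, z ∈ L^q(μ; ℝ^d)` and `g ∈ L²(μ; ℝ^d)`,
`x ↦ (‖w(x)‖^(p−2) − ‖w̃(x)‖^(p−2)) (z(x)·g(x))` is integrable and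
`|∫ (‖w‖^(p−2) − ‖w̃‖^(p−2))(z·g) dμ|
  ≤ C (‖w‖_{L^q} + ‖w̃‖_{L^q})^(p−3) ‖w−w̃‖_{L^q} ‖z‖_{L^q} ‖g‖_{L²}`. -/
theorem forchheimer_difference_holder {d : ℕ} (hd : 1 ≤ d)
    (p : ℝ) (hp1 : 3 ≤ p) (hp2 : p ≤ 4) :
    ∃ C : ℝ, 0 < C ∧
      ∀ (Ω : Type u) [MeasurableSpace Ω], ∀ (μ : Measure Ω)
        (w w' z g : Ω → EuclideanSpace ℝ (Fin d)),
        MemLp w (ENNReal.ofReal (2 * (p - 1))) μ →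
        MemLp w' (ENNReal.ofReal (2 * (p - 1))) μ →
        MemLp z (ENNReal.ofReal (2 * (p - 1))) μ →
        MemLp g 2 μ →
        Integrable
            (fun x => (‖w x‖ ^ (p - 2) - ‖w' x‖ ^ (p - 2)) * ∑ i, z x i * g x i) μ ∧
          |∫ x, (‖w x‖ ^ (p - 2) - ‖w' x‖ ^ (p - 2)) * ∑ i, z x i * g x i ∂μ| ≤
            C * ((eLpNorm w (ENNReal.ofReal (2 * (p - 1))) μ).toReal +
                  (eLpNorm w' (ENNReal.ofReal (2 * (p - 1))) μ).toReal) ^ (p - 3) *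
              (eLpNorm (fun x => w x - w' x) (ENNReal.ofReal (2 * (p - 1))) μ).toReal *
              (eLpNorm z (ENNReal.ofReal (2 * (p - 1))) μ).toReal *
              (eLpNorm g 2 μ).toReal := by
  set q : ℝ := 2 * (p - 1) with hq_def
  have hq4 : (4:ℝ) ≤ q := by simp only [hq_def]; linarith
  have hq0 : (0:ℝ) < q := by linarith
  set qe : ENNReal := ENNReal.ofReal q with hqe_def
  have hqe_toReal : qe.toReal = q := ENNReal.toReal_ofReal hq0.le
  have hqe0 : qe ≠ 0 := by
    simp only [hqe_def, ne_eq, ENNReal.ofReal_eq_zero, not_le]; exact hq0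
  have hqe_top : qe ≠ ⊤ := ENNReal.ofReal_ne_top
  have hqe1 : (1:ENNReal) ≤ qe := by
    rw [hqe_def, ← ENNReal.ofReal_one]
    exact ENNReal.ofReal_le_ofReal (by linarith)
  refine ⟨p - 2, by linarith, ?_⟩
  intro Ω _ μ w w' z g hw hw' hz hg
  set F : Ω → ℝ := fun x => (‖w x‖ ^ (p - 2) - ‖w' x‖ ^ (p - 2)) * ∑ i, z x i * g x i
    with hF_def
  -- inner product rewriting
  have hinner : ∀ x, (∑ i, z x i * g x i) = (inner ℝ (z x) (g x) : ℝ) := by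
    intro x
    simp [PiLp.inner_apply, RCLike.inner_apply, starRingEnd_apply, mul_comm]
  -- measurability of the integrand
  have hFmeas : AEStronglyMeasurable F μ := by
    have hc : Continuous (fun t : ℝ => t ^ (p - 2)) :=
      Real.continuous_rpow_const (by linarith)
    have h1 : AEStronglyMeasurable (fun x => ‖w x‖ ^ (p - 2)) μ :=
      hc.comp_aestronglyMeasurable hw.1.norm
    have h2 : AEStronglyMeasurable (fun x => ‖w' x‖ ^ (p - 2)) μ :=
      hc.comp_aestronglyMeasurable hw'.1.norm
    have h3 : AEStronglyMeasurable (fun x => ∑ i, z x i * g x i) μ := by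
      have : AEStronglyMeasurable (fun x => (inner ℝ (z x) (g x) : ℝ)) μ := hz.1.inner hg.1
      exact this.congr (Filter.Eventually.of_forall fun x => (hinner x).symm)
    exact (h1.sub h2).mul h3
  -- the four Hölder factors
  set f1 : Ω → ENNReal := fun x => ((‖w x‖₊ : ENNReal) + (‖w' x‖₊ : ENNReal)) ^ q with hf1
  set f2 : Ω → ENNReal := fun x => (‖w x - w' x‖₊ : ENNReal) ^ q with hf2
  set f3 : Ω → ENNReal := fun x => (‖z x‖₊ : ENNReal) ^ q with hf3
  set f4 : Ω → ENNReal := fun x => (‖g x‖₊ : ENNReal) ^ (2:ℝ) with hf4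
  set e : Fin 4 → ℝ := ![(p-3)/q, 1/q, 1/q, 1/2] with he
  set Ff : Fin 4 → Ω → ENNReal := ![f1, f2, f3, f4] with hFf
  have he_nonneg : ∀ i ∈ Finset.univ, 0 ≤ e i := by
    intro i _
    fin_cases i <;> simp only [he, Matrix.cons_val_zero, Matrix.cons_val_one, Matrix.head_cons,
      Matrix.cons_val_two, Matrix.tail_cons, Matrix.cons_val_three]
    · exact div_nonneg (by linarith) hq0.le
    · exact div_nonneg zero_le_one hq0.le
    · exact div_nonneg zero_le_one hq0.le
    · norm_num
  have he_sum : ∑ i, e i = 1 := by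
    simp [he, Fin.sum_univ_four]
    field_simp
    ring
  have hFf_meas : ∀ i ∈ Finset.univ, AEMeasurable (Ff i) μ := by
    intro i _
    fin_cases i <;> simp only [hFf, hf1, hf2, hf3, hf4, Matrix.cons_val_zero,
      Matrix.cons_val_one, Matrix.head_cons, Matrix.cons_val_two, Matrix.tail_cons,
      Matrix.cons_val_three]
    · exact (hw.1.enorm.add hw'.1.enorm).pow_const _
    · exact (hw.1.sub hw'.1).enorm.pow_const _
    · exact hz.1.enorm.pow_const _
    · exact hg.1.enorm.pow_const _
  -- pointwise bound
  have hptw : ∀ x, (‖F x‖₊ : ENNReal) ≤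
      ENNReal.ofReal (p - 2) * ∏ i, Ff i x ^ e i := by
    intro x
    have hreal : |F x| ≤ (p - 2) * ((‖w x‖ + ‖w' x‖) ^ (p - 3) *
        (‖w x - w' x‖ * (‖z x‖ * ‖g x‖))) := by
      have hab : |‖w x‖ ^ (p-2) - ‖w' x‖ ^ (p-2)| ≤
          (p - 2) * (‖w x‖ + ‖w' x‖) ^ (p - 3) * ‖w x - w' x‖ := by
        have h := rpow_diff_le (s := p - 2) (by linarith) (norm_nonneg (w x))
          (norm_nonneg (w' x))
        have h2 : |‖w x‖ - ‖w' x‖| ≤ ‖w x - w' x‖ := abs_norm_sub_norm_le _ _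
        calc |‖w x‖ ^ (p-2) - ‖w' x‖ ^ (p-2)|
            ≤ (p-2) * (‖w x‖ + ‖w' x‖) ^ (p - 2 - 1) * |‖w x‖ - ‖w' x‖| := h
          _ ≤ (p-2) * (‖w x‖ + ‖w' x‖) ^ (p - 3) * ‖w x - w' x‖ := by
              rw [show p - 2 - 1 = p - 3 by ring]
              refine mul_le_mul_of_nonneg_left h2 ?_
              exact mul_nonneg (by linarith) (Real.rpow_nonneg (by positivity) _)
      have hcs : |∑ i, z x i * g x i| ≤ ‖z x‖ * ‖g x‖ := by
        rw [hinner x]; exact abs_real_inner_le_norm _ _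
      calc |F x| = |‖w x‖ ^ (p-2) - ‖w' x‖ ^ (p-2)| * |∑ i, z x i * g x i| := by
            rw [hF_def]; exact abs_mul _ _
        _ ≤ ((p - 2) * (‖w x‖ + ‖w' x‖) ^ (p - 3) * ‖w x - w' x‖) * (‖z x‖ * ‖g x‖) := by
            refine mul_le_mul hab hcs (abs_nonneg _) ?_
            exact mul_nonneg (mul_nonneg (by linarith)
              (Real.rpow_nonneg (by positivity) _)) (norm_nonneg _)
        _ = (p - 2) * ((‖w x‖ + ‖w' x‖) ^ (p - 3) *
              (‖w x - w' x‖ * (‖z x‖ * ‖g x‖))) := by ring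
    -- translate to ENNReal
    have hco : (‖F x‖₊ : ENNReal) = ENNReal.ofReal |F x| := by
      rw [← enorm_eq_nnnorm, ← ofReal_norm, Real.norm_eq_abs]
    rw [hco]
    refine le_trans (ENNReal.ofReal_le_ofReal hreal) ?_
    have hsplit : ENNReal.ofReal ((p - 2) * ((‖w x‖ + ‖w' x‖) ^ (p - 3) *
        (‖w x - w' x‖ * (‖z x‖ * ‖g x‖)))) =
        ENNReal.ofReal (p - 2) * (ENNReal.ofReal ((‖w x‖ + ‖w' x‖) ^ (p - 3)) *
        (ENNReal.ofReal ‖w x - w' x‖ * (ENNReal.ofReal ‖z x‖ * ENNReal.ofReal ‖g x‖))) := by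
      rw [ENNReal.ofReal_mul (by linarith), ENNReal.ofReal_mul (by positivity),
        ENNReal.ofReal_mul (by positivity), ENNReal.ofReal_mul (by positivity)]
    rw [hsplit]
    have hprod_eq : ∏ i, Ff i x ^ e i =
        ENNReal.ofReal ((‖w x‖ + ‖w' x‖) ^ (p - 3)) *
        (ENNReal.ofReal ‖w x - w' x‖ * (ENNReal.ofReal ‖z x‖ * ENNReal.ofReal ‖g x‖)) := by
      rw [Fin.prod_univ_four]
      have e0 : Ff 0 x ^ e 0 = ENNReal.ofReal ((‖w x‖ + ‖w' x‖) ^ (p - 3)) := by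
        simp only [hFf, he, hf1, Matrix.cons_val_zero]
        rw [← ENNReal.rpow_mul, show q * ((p-3)/q) = p - 3 by field_simp]
        rw [← enorm_eq_nnnorm, ← ofReal_norm, ← enorm_eq_nnnorm, ← ofReal_norm,
          ← ENNReal.ofReal_add (norm_nonneg _) (norm_nonneg _),
          ENNReal.ofReal_rpow_of_nonneg (by positivity) (by linarith)]
      have e1 : Ff 1 x ^ e 1 = ENNReal.ofReal ‖w x - w' x‖ := by
        simp only [hFf, he, hf2, Matrix.cons_val_one, Matrix.head_cons, Matrix.cons_val_zero]
        rw [← ENNReal.rpow_mul, show q * (1/q) = 1 by field_simp, ENNReal.rpow_one,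
          ← enorm_eq_nnnorm, ← ofReal_norm]
      have e2 : Ff 2 x ^ e 2 = ENNReal.ofReal ‖z x‖ := by
        simp only [hFf, he, hf3, Matrix.cons_val_two, Matrix.tail_cons, Matrix.head_cons]
        rw [← ENNReal.rpow_mul, show q * (1/q) = 1 by field_simp, ENNReal.rpow_one,
          ← enorm_eq_nnnorm, ← ofReal_norm]
      have e3 : Ff 3 x ^ e 3 = ENNReal.ofReal ‖g x‖ := by
        simp only [hFf, he, hf4, Matrix.cons_val_three, Matrix.tail_cons, Matrix.head_cons]
        rw [← ENNReal.rpow_mul, show (2:ℝ) * (1/2) = 1 by norm_num, ENNReal.rpow_one,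
          ← enorm_eq_nnnorm, ← ofReal_norm]
      rw [e0, e1, e2, e3]; ring
    rw [hprod_eq]
  -- Hölder
  have hHolder := ENNReal.lintegral_prod_norm_pow_le (μ := μ) Finset.univ hFf_meas he_sum
    he_nonneg
  -- identify Lp norms
  have hid2 : (∫⁻ x, Ff 1 x ∂μ) ^ e 1 = eLpNorm (fun x => w x - w' x) qe μ := by
    simp only [hFf, he, hf2, Matrix.cons_val_one, Matrix.head_cons, Matrix.cons_val_zero]
    rw [eLpNorm_eq_lintegral_rpow_enorm_toReal hqe0 hqe_top, hqe_toReal]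
    simp only [enorm_eq_nnnorm]
  have hid3 : (∫⁻ x, Ff 2 x ∂μ) ^ e 2 = eLpNorm z qe μ := by
    simp only [hFf, he, hf3, Matrix.cons_val_two, Matrix.tail_cons, Matrix.head_cons]
    rw [eLpNorm_eq_lintegral_rpow_enorm_toReal hqe0 hqe_top, hqe_toReal]
    simp only [enorm_eq_nnnorm]
  have hid4 : (∫⁻ x, Ff 3 x ∂μ) ^ e 3 = eLpNorm g 2 μ := by
    simp only [hFf, he, hf4, Matrix.cons_val_three, Matrix.tail_cons, Matrix.head_cons]
    rw [eLpNorm_eq_lintegral_rpow_enorm_toReal two_ne_zero ENNReal.ofNat_ne_top]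
    simp only [enorm_eq_nnnorm]
    norm_num
  have hid1 : (∫⁻ x, Ff 0 x ∂μ) ^ e 0 ≤ (eLpNorm w qe μ + eLpNorm w' qe μ) ^ (p - 3) := by
    simp only [hFf, he, hf1, Matrix.cons_val_zero]
    have key : (∫⁻ x, ((‖w x‖₊ : ENNReal) + (‖w' x‖₊ : ENNReal)) ^ q ∂μ) ^ (1/q) =
        eLpNorm (fun x => ‖w x‖ + ‖w' x‖) qe μ := by
      rw [eLpNorm_eq_lintegral_rpow_enorm_toReal hqe0 hqe_top, hqe_toReal]
      congr 1
      refine lintegral_congr fun x => ?_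
      congr 1
      simp only [enorm_eq_nnnorm]
      rw [← enorm_eq_nnnorm, ← ofReal_norm, ← enorm_eq_nnnorm, ← ofReal_norm,
        ← enorm_eq_nnnorm, ← ofReal_norm, ← ENNReal.ofReal_add (norm_nonneg _) (norm_nonneg _),
        Real.norm_of_nonneg (by positivity)]
    have hle : eLpNorm (fun x => ‖w x‖ + ‖w' x‖) qe μ ≤ eLpNorm w qe μ + eLpNorm w' qe μ := by
      have := eLpNorm_add_le (hw.1.norm) (hw'.1.norm) hqe1 (μ := μ)
      rw [eLpNorm_norm, eLpNorm_norm] at this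
      exact this
    calc (∫⁻ x, ((‖w x‖₊ : ENNReal) + (‖w' x‖₊ : ENNReal)) ^ q ∂μ) ^ ((p-3)/q)
        = ((∫⁻ x, ((‖w x‖₊ : ENNReal) + (‖w' x‖₊ : ENNReal)) ^ q ∂μ) ^ (1/q)) ^ (p-3) := by
          rw [← ENNReal.rpow_mul, show 1/q * (p-3) = (p-3)/q by ring]
      _ = (eLpNorm (fun x => ‖w x‖ + ‖w' x‖) qe μ) ^ (p-3) := by rw [key]
      _ ≤ (eLpNorm w qe μ + eLpNorm w' qe μ) ^ (p-3) :=
          ENNReal.rpow_le_rpow hle (by linarith)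
  -- combined bound
  set R : ENNReal := ENNReal.ofReal (p - 2) * ((eLpNorm w qe μ + eLpNorm w' qe μ) ^ (p - 3) *
      (eLpNorm (fun x => w x - w' x) qe μ * (eLpNorm z qe μ * eLpNorm g 2 μ))) with hR
  have hmain : ∫⁻ x, (‖F x‖₊ : ENNReal) ∂μ ≤ R := by
    calc ∫⁻ x, (‖F x‖₊ : ENNReal) ∂μ
        ≤ ∫⁻ x, ENNReal.ofReal (p - 2) * ∏ i, Ff i x ^ e i ∂μ := lintegral_mono hptw
      _ = ENNReal.ofReal (p - 2) * ∫⁻ x, ∏ i, Ff i x ^ e i ∂μ :=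
          lintegral_const_mul' _ _ ENNReal.ofReal_ne_top
      _ ≤ ENNReal.ofReal (p - 2) * ∏ i, (∫⁻ x, Ff i x ∂μ) ^ e i :=
          mul_le_mul_right hHolder _
      _ ≤ R := by
          rw [hR]
          refine mul_le_mul_right ?_ _
          rw [Fin.prod_univ_four, hid2, hid3, hid4]
          calc (∫⁻ x, Ff 0 x ∂μ) ^ e 0 * eLpNorm (fun x => w x - w' x) qe μ *
                eLpNorm z qe μ * eLpNorm g 2 μ
              ≤ (eLpNorm w qe μ + eLpNorm w' qe μ) ^ (p - 3) *
                eLpNorm (fun x => w x - w' x) qe μ * eLpNorm z qe μ * eLpNorm g 2 μ := by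
                exact mul_le_mul_left (mul_le_mul_left (mul_le_mul_left hid1 _) _) _
            _ = (eLpNorm w qe μ + eLpNorm w' qe μ) ^ (p - 3) *
                (eLpNorm (fun x => w x - w' x) qe μ * (eLpNorm z qe μ * eLpNorm g 2 μ)) := by
                ring
  -- finiteness
  have hwne : eLpNorm w qe μ ≠ ⊤ := hw.2.ne
  have hw'ne : eLpNorm w' qe μ ≠ ⊤ := hw'.2.ne
  have hsubne : eLpNorm (fun x => w x - w' x) qe μ ≠ ⊤ := (hw.sub hw').2.ne
  have hzne : eLpNorm z qe μ ≠ ⊤ := hz.2.ne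
  have hgne : eLpNorm g 2 μ ≠ ⊤ := hg.2.ne
  have hRne : R ≠ ⊤ := by
    rw [hR]
    refine ENNReal.mul_ne_top ENNReal.ofReal_ne_top ?_
    refine ENNReal.mul_ne_top ?_ (ENNReal.mul_ne_top hsubne (ENNReal.mul_ne_top hzne hgne))
    exact ENNReal.rpow_ne_top_of_nonneg (by linarith) (ENNReal.add_ne_top.2 ⟨hwne, hw'ne⟩)
  have hInt : Integrable F μ := ⟨hFmeas, hmain.trans_lt hRne.lt_top⟩
  refine ⟨hInt, ?_⟩
  -- final estimate
  have hnorm : |∫ x, F x ∂μ| ≤ (∫⁻ x, (‖F x‖₊ : ENNReal) ∂μ).toReal := by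
    rw [← Real.norm_eq_abs]
    refine le_trans (norm_integral_le_lintegral_norm F) ?_
    refine le_of_eq ?_
    congr 1
    exact lintegral_congr fun x => (ofReal_norm (F x))
  have hfin : |∫ x, F x ∂μ| ≤ R.toReal :=
    hnorm.trans (ENNReal.toReal_mono hRne hmain)
  refine hfin.trans (le_of_eq ?_)
  rw [hR]
  rw [ENNReal.toReal_mul, ENNReal.toReal_mul, ENNReal.toReal_mul, ENNReal.toReal_mul,
    ENNReal.toReal_ofReal (by linarith), ← ENNReal.toReal_rpow,
    ENNReal.toReal_add hwne hw'ne]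
  ring
end

section
/- Let d ≥ 1 and p ∈ [3,4]. There exists a constant C > 0 depending only on p such that for every measure μ on a measurable space Ω and all u, v : Ω → ℝ^d belonging to L^{3(p−2)}(μ) ∩ L⁶(μ), there holds ‖ ‖u‖^{p−2}u − ‖v‖^{p−2}v ‖_{L²(μ)} ≤ C · ( ‖u‖_{L^{3(p−2)}(μ)}^{p−2} + ‖v‖_{L^{3(p−2)}(μ)}^{p−2} ) · ‖u − v‖_{L⁶(μ)}. -/
open MeasureTheory
open scoped ENNReal

universe u

/-- MVT bound for rpow differences. -/
lemma rpow_diff_le_s7 {q s x y : ℝ} (hq : 1 ≤ q) (hy : 0 ≤ y) (hxy : y ≤ x) (hxs : x ≤ s) :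
    x ^ q - y ^ q ≤ q * s ^ (q - 1) * (x - y) := by
  have hx : 0 ≤ x := hy.trans hxy
  have hs : 0 ≤ s := hx.trans hxs
  have key := Convex.norm_image_sub_le_of_norm_hasDerivWithin_le
    (f := fun t : ℝ => t ^ q) (f' := fun t : ℝ => q * t ^ (q - 1)) (s := Set.Icc y x)
    (C := q * s ^ (q - 1))
    (fun t _ => (Real.hasDerivAt_rpow_const (Or.inr hq)).hasDerivWithinAt)
    (fun t ht => by
      have ht0 : 0 ≤ t := hy.trans ht.1
      have hts : t ≤ s := ht.2.trans hxs
      rw [Real.norm_eq_abs, abs_of_nonneg (by positivity)]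
      exact mul_le_mul_of_nonneg_left (Real.rpow_le_rpow ht0 hts (by linarith))
        (by linarith))
    (convex_Icc y x) ⟨le_refl y, hxy⟩ ⟨hxy, le_refl x⟩
  have h1 : x ^ q - y ^ q ≤ |x ^ q - y ^ q| := le_abs_self _
  have h2 : ‖x ^ q - y ^ q‖ = |x ^ q - y ^ q| := rfl
  have h3 : ‖x - y‖ = x - y := by rw [Real.norm_eq_abs, abs_of_nonneg (by linarith)]
  calc x ^ q - y ^ q ≤ |x ^ q - y ^ q| := h1
    _ ≤ q * s ^ (q - 1) * ‖x - y‖ := by rw [← h2]; exact key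
    _ = q * s ^ (q - 1) * (x - y) := by rw [h3]

lemma abs_rpow_diff_le {q s x y : ℝ} (hq : 1 ≤ q) (hx : 0 ≤ x) (hy : 0 ≤ y)
    (hxs : x ≤ s) (hys : y ≤ s) :
    |x ^ q - y ^ q| ≤ q * s ^ (q - 1) * |x - y| := by
  rcases le_total y x with h | h
  · rw [abs_of_nonneg (sub_nonneg.2 (Real.rpow_le_rpow hy h (by linarith))),
      abs_of_nonneg (sub_nonneg.2 h)]
    exact rpow_diff_le_s7 hq hy h hxs
  · rw [abs_sub_comm, abs_sub_comm x y,
      abs_of_nonneg (sub_nonneg.2 (Real.rpow_le_rpow hx h (by linarith))),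
      abs_of_nonneg (sub_nonneg.2 h)]
    exact rpow_diff_le_s7 hq hx h hys

/-- Pointwise inequality. -/
lemma ptwise {E : Type*} [NormedAddCommGroup E] [NormedSpace ℝ E] {q : ℝ} (hq : 1 ≤ q)
    (a b : E) :
    ‖(‖a‖ ^ q) • a - (‖b‖ ^ q) • b‖ ≤ (1 + q) * (‖a‖ + ‖b‖) ^ q * ‖a - b‖ := by
  set s : ℝ := ‖a‖ + ‖b‖ with hs
  have hs0 : 0 ≤ s := by positivity
  rcases eq_or_lt_of_le hs0 with h0 | hspos
  · have ha : a = 0 := by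
      have : ‖a‖ = 0 := by
        have := norm_nonneg a; have := norm_nonneg b; simp only [hs] at h0; linarith
      simpa using this
    have hb : b = 0 := by
      have : ‖b‖ = 0 := by
        have := norm_nonneg a; have := norm_nonneg b; simp only [hs] at h0; linarith
      simpa using this
    simp [ha, hb]
  have key : (‖a‖ ^ q) • a - (‖b‖ ^ q) • b
      = (‖a‖ ^ q) • (a - b) + (‖a‖ ^ q - ‖b‖ ^ q) • b := by
    rw [smul_sub, sub_smul]; abel
  have habs : |‖a‖ ^ q - ‖b‖ ^ q| ≤ q * s ^ (q - 1) * ‖a - b‖ := by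
    calc |‖a‖ ^ q - ‖b‖ ^ q|
        ≤ q * s ^ (q - 1) * |‖a‖ - ‖b‖| :=
          abs_rpow_diff_le hq (norm_nonneg a) (norm_nonneg b)
            (by rw [hs]; linarith [norm_nonneg b]) (by rw [hs]; linarith [norm_nonneg a])
      _ ≤ q * s ^ (q - 1) * ‖a - b‖ := by
          exact mul_le_mul_of_nonneg_left (abs_norm_sub_norm_le a b) (by positivity)
  have has : ‖a‖ ≤ s := by rw [hs]; linarith [norm_nonneg b]
  have hbs : ‖b‖ ≤ s := by rw [hs]; linarith [norm_nonneg a]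
  calc ‖(‖a‖ ^ q) • a - (‖b‖ ^ q) • b‖
      ≤ ‖(‖a‖ ^ q) • (a - b)‖ + ‖(‖a‖ ^ q - ‖b‖ ^ q) • b‖ := by
        rw [key]; exact norm_add_le _ _
    _ = ‖a‖ ^ q * ‖a - b‖ + |‖a‖ ^ q - ‖b‖ ^ q| * ‖b‖ := by
        rw [norm_smul, norm_smul, Real.norm_eq_abs, Real.norm_eq_abs,
          abs_of_nonneg (Real.rpow_nonneg (norm_nonneg a) q)]
    _ ≤ s ^ q * ‖a - b‖ + (q * s ^ (q - 1) * ‖a - b‖) * s := by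
        apply add_le_add
        · exact mul_le_mul_of_nonneg_right
            (Real.rpow_le_rpow (norm_nonneg a) has (by linarith)) (norm_nonneg _)
        · calc |‖a‖ ^ q - ‖b‖ ^ q| * ‖b‖ ≤ (q * s ^ (q - 1) * ‖a - b‖) * ‖b‖ :=
              mul_le_mul_of_nonneg_right habs (norm_nonneg b)
            _ ≤ (q * s ^ (q - 1) * ‖a - b‖) * s :=
              mul_le_mul_of_nonneg_left hbs (by positivity)
    _ = (1 + q) * s ^ q * ‖a - b‖ := by
        have hpow : s ^ (q - 1) * s = s ^ q := by
          have h := Real.rpow_add hspos (q - 1) 1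
          rw [Real.rpow_one] at h
          rw [← h]; norm_num
        calc s ^ q * ‖a - b‖ + q * s ^ (q - 1) * ‖a - b‖ * s
            = s ^ q * ‖a - b‖ + q * (s ^ (q - 1) * s) * ‖a - b‖ := by ring
          _ = (1 + q) * s ^ q * ‖a - b‖ := by rw [hpow]; ring

/-- For `d ≥ 1` and `p ∈ [3,4]` there is `C > 0` depending only on `p` such that for
every measure `μ` and all `u, v ∈ L^{3(p−2)}(μ; ℝ^d) ∩ L⁶(μ; ℝ^d)`:
`‖ ‖u‖^(p−2) u − ‖v‖^(p−2) v ‖_{L²}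
  ≤ C (‖u‖_{L^{3(p−2)}}^(p−2) + ‖v‖_{L^{3(p−2)}}^(p−2)) ‖u−v‖_{L⁶}`. -/
theorem power_difference_L2 {d : ℕ} (hd : 1 ≤ d) (p : ℝ) (hp1 : 3 ≤ p) (hp2 : p ≤ 4) :
    ∃ C : ℝ, 0 < C ∧
      ∀ (Ω : Type u) [MeasurableSpace Ω], ∀ (μ : Measure Ω)
        (u v : Ω → EuclideanSpace ℝ (Fin d)),
        MemLp u (ENNReal.ofReal (3 * (p - 2))) μ → MemLp u 6 μ →
        MemLp v (ENNReal.ofReal (3 * (p - 2))) μ → MemLp v 6 μ →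
        (eLpNorm (fun x => (‖u x‖ ^ (p - 2)) • u x - (‖v x‖ ^ (p - 2)) • v x) 2 μ).toReal ≤
          C * ((eLpNorm u (ENNReal.ofReal (3 * (p - 2))) μ).toReal ^ (p - 2) +
                (eLpNorm v (ENNReal.ofReal (3 * (p - 2))) μ).toReal ^ (p - 2)) *
            (eLpNorm (fun x => u x - v x) 6 μ).toReal := by
  set q : ℝ := p - 2 with hqdef
  have hq1 : 1 ≤ q := by rw [hqdef]; linarith
  have hq0 : 0 < q := by linarith
  refine ⟨(1 + q) * 2 ^ (q - 1), by positivity, ?_⟩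
  intro Ω _ μ u v hur hu6 hvr hv6
  set r : ℝ≥0∞ := ENNReal.ofReal (3 * q) with hrdef
  have hr1 : (1 : ℝ≥0∞) ≤ r := by
    rw [hrdef, ← ENNReal.ofReal_one]
    exact ENNReal.ofReal_le_ofReal (by linarith)
  have hu : AEStronglyMeasurable u μ := hu6.1
  have hv : AEStronglyMeasurable v μ := hv6.1
  set Nu : ℝ≥0∞ := eLpNorm u r μ with hNu
  set Nv : ℝ≥0∞ := eLpNorm v r μ with hNv
  set D : ℝ≥0∞ := eLpNorm (fun x => u x - v x) 6 μ with hD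
  -- the scalar factor
  set φ : Ω → ℝ := fun x => (1 + q) * (‖u x‖ + ‖v x‖) ^ q with hφdef
  have hφm : AEStronglyMeasurable φ μ := by
    apply AEStronglyMeasurable.const_mul
    exact ((hu.norm.add hv.norm).aemeasurable.pow aemeasurable_const).aestronglyMeasurable
  -- Step 1: pointwise bound
  have step1 : eLpNorm (fun x => (‖u x‖ ^ q) • u x - (‖v x‖ ^ q) • v x) 2 μ
      ≤ eLpNorm (φ • fun x => u x - v x) 2 μ := by
    apply eLpNorm_mono
    intro x
    have h := ptwise hq1 (u x) (v x)
    have : ‖(φ • fun y => u y - v y) x‖ = (1 + q) * (‖u x‖ + ‖v x‖) ^ q * ‖u x - v x‖ := by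
      simp only [Pi.smul_apply', hφdef, norm_smul, Real.norm_eq_abs]
      rw [abs_of_nonneg (by positivity)]
    rw [this]
    exact h
  -- Step 2: Hölder
  have h236 : (1 : ℝ≥0∞) / 2 = 1 / 3 + 1 / 6 := by
    have h3 : (1:ℝ≥0∞)/3 = 2/6 := by
      rw [ENNReal.div_eq_div_iff] <;> norm_num
    rw [h3, ENNReal.div_add_div_same]
    rw [ENNReal.div_eq_div_iff] <;> norm_num
  have step2 : eLpNorm (φ • fun x => u x - v x) 2 μ ≤ eLpNorm φ 3 μ * D :=
    eLpNorm_smul_le_mul_eLpNorm (hu.sub hv) hφm (hpqr := ⟨by simpa only [one_div] using h236.symm⟩)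
  -- Step 3: constant out
  have step3 : eLpNorm φ 3 μ = ‖(1 + q)‖₊ * eLpNorm (fun x => (‖u x‖ + ‖v x‖) ^ q) 3 μ := by
    have : φ = (1 + q) • fun x => (‖u x‖ + ‖v x‖) ^ q := by
      ext x; simp [hφdef]
    rw [this, eLpNorm_const_smul]
    rfl
  -- Step 4: rpow out
  have step4 : eLpNorm (fun x => (‖u x‖ + ‖v x‖) ^ q) 3 μ
      = eLpNorm (fun x => ‖u x‖ + ‖v x‖) r μ ^ q := by
    have heq : (fun x => (‖u x‖ + ‖v x‖) ^ q)
        = fun x => ‖(fun y => ‖u y‖ + ‖v y‖) x‖ ^ q := by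
      ext x; rw [Real.norm_of_nonneg (by positivity)]
    rw [heq, eLpNorm_norm_rpow _ hq0]
    congr 1
    rw [hrdef, ENNReal.ofReal_mul (by norm_num : (0:ℝ) ≤ 3)]
    norm_num
  -- Step 5: triangle
  have step5 : eLpNorm (fun x => ‖u x‖ + ‖v x‖) r μ ≤ Nu + Nv := by
    calc eLpNorm (fun x => ‖u x‖ + ‖v x‖) r μ
        = eLpNorm ((fun x => ‖u x‖) + fun x => ‖v x‖) r μ := rfl
      _ ≤ eLpNorm (fun x => ‖u x‖) r μ + eLpNorm (fun x => ‖v x‖) r μ :=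
          eLpNorm_add_le hu.norm hv.norm hr1
      _ = Nu + Nv := by rw [eLpNorm_norm, eLpNorm_norm]
  -- Step 6: power split
  have step6 : (Nu + Nv) ^ q ≤ (2 : ℝ≥0∞) ^ (q - 1) * (Nu ^ q + Nv ^ q) :=
    ENNReal.rpow_add_le_mul_rpow_add_rpow Nu Nv hq1
  -- combine
  have main : eLpNorm (fun x => (‖u x‖ ^ q) • u x - (‖v x‖ ^ q) • v x) 2 μ
      ≤ (‖(1 + q)‖₊ : ℝ≥0∞) * ((2 : ℝ≥0∞) ^ (q - 1) * (Nu ^ q + Nv ^ q)) * D := by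
    calc eLpNorm (fun x => (‖u x‖ ^ q) • u x - (‖v x‖ ^ q) • v x) 2 μ
        ≤ eLpNorm φ 3 μ * D := step1.trans step2
      _ = (‖(1 + q)‖₊ : ℝ≥0∞) * (eLpNorm (fun x => ‖u x‖ + ‖v x‖) r μ ^ q) * D := by
          rw [step3, step4]
      _ ≤ (‖(1 + q)‖₊ : ℝ≥0∞) * ((2 : ℝ≥0∞) ^ (q - 1) * (Nu ^ q + Nv ^ q)) * D := by
          gcongr
          exact (ENNReal.rpow_le_rpow step5 hq0.le).trans step6
  -- finiteness
  have hNu_fin : Nu ≠ ⊤ := by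
    have := hur.2; rw [hrdef] at *
    have : eLpNorm u (ENNReal.ofReal (3 * (p - 2))) μ < ⊤ := hur.2
    simpa [hNu, hrdef, hqdef] using this.ne
  have hNv_fin : Nv ≠ ⊤ := by
    have : eLpNorm v (ENNReal.ofReal (3 * (p - 2))) μ < ⊤ := hvr.2
    simpa [hNv, hrdef, hqdef] using this.ne
  have hD_fin : D ≠ ⊤ := (hu6.sub hv6).2.ne
  have hNuq : Nu ^ q ≠ ⊤ := (ENNReal.rpow_lt_top_of_nonneg hq0.le hNu_fin).ne
  have hNvq : Nv ^ q ≠ ⊤ := (ENNReal.rpow_lt_top_of_nonneg hq0.le hNv_fin).ne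
  have hRHS_fin : (‖(1 + q)‖₊ : ℝ≥0∞) * ((2 : ℝ≥0∞) ^ (q - 1) * (Nu ^ q + Nv ^ q)) * D ≠ ⊤ := by
    apply ENNReal.mul_ne_top
    apply ENNReal.mul_ne_top
    · exact ENNReal.coe_ne_top
    · exact ENNReal.mul_ne_top (ENNReal.rpow_lt_top_of_nonneg (by linarith) (by norm_num)).ne
        (by rw [Ne, ENNReal.add_eq_top]; push_neg; exact ⟨hNuq, hNvq⟩)
    · exact hD_fin
  have final := ENNReal.toReal_mono hRHS_fin main
  have hrw : ((‖(1 + q)‖₊ : ℝ≥0∞) * ((2 : ℝ≥0∞) ^ (q - 1) * (Nu ^ q + Nv ^ q)) * D).toReal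
      = (1 + q) * 2 ^ (q - 1) * (Nu.toReal ^ q + Nv.toReal ^ q) * D.toReal := by
    rw [ENNReal.toReal_mul, ENNReal.toReal_mul, ENNReal.toReal_mul,
      ENNReal.toReal_add hNuq hNvq, ← ENNReal.toReal_rpow, ← ENNReal.toReal_rpow,
      ← ENNReal.toReal_rpow]
    simp only [ENNReal.coe_toReal, coe_nnnorm, Real.norm_eq_abs, ENNReal.toReal_ofNat]
    rw [abs_of_nonneg (by positivity)]
    ring
  rw [hrw] at final
  convert final using 2
end

section
/- Let d ≥ 1, let Ω ⊆ ℝ^d be open, let ν > 0, α > 0, F > 0 and r ∈ [3,4] be real parameters, and let f : Ω → ℝ^d. Let u : Ω → ℝ^d be twice continuously differentiable and q : Ω → ℝ be continuously differentiable, and define σ : Ω → ℝ^{d×d} by σ := ν·Du − u⊗u − q·I. Then the pair (u,q) satisfies the convective Brinkman–Forchheimer system −ν·Δu + (Du)·u + α·u + F·‖u‖^{r−2}·u + ∇q = f and div u = 0 on Ω if and only if the pair (σ,u) satisfies (1/ν)·σ^d + (1/ν)·(u⊗u)^d = Du and α·u + F·‖u‖^{r−2}·u − div σ = f on Ω. 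-/
/-- The partial derivative `∂_j f (x)` of a scalar field on `ℝ^d`. -/
noncomputable def pderiv' {d : ℕ} (f : EuclideanSpace ℝ (Fin d) → ℝ)
    (x : EuclideanSpace ℝ (Fin d)) (j : Fin d) : ℝ :=
  fderiv ℝ f x (EuclideanSpace.single j 1)

/-- The Jacobian matrix `(Du)_{ij} = ∂ u_i / ∂ x_j` of a vector field on `ℝ^d`. -/
noncomputable def jac {d : ℕ} (u : EuclideanSpace ℝ (Fin d) → EuclideanSpace ℝ (Fin d))
    (x : EuclideanSpace ℝ (Fin d)) : Matrix (Fin d) (Fin d) ℝ :=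
  Matrix.of fun i j => pderiv' (fun y => u y i) x j

/-- Componentwise Laplacian `(Δu)_i = ∑_j ∂²u_i/∂x_j²`. -/
noncomputable def vlap {d : ℕ} (u : EuclideanSpace ℝ (Fin d) → EuclideanSpace ℝ (Fin d))
    (x : EuclideanSpace ℝ (Fin d)) (i : Fin d) : ℝ :=
  ∑ j, pderiv' (fun y => pderiv' (fun z => u z i) y j) x j

/-- Divergence `div u = ∑_j ∂_j u_j` of a vector field. -/
noncomputable def vdiv {d : ℕ} (u : EuclideanSpace ℝ (Fin d) → EuclideanSpace ℝ (Fin d))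
    (x : EuclideanSpace ℝ (Fin d)) : ℝ :=
  ∑ j, pderiv' (fun y => u y j) x j

/-- Row-wise divergence `(div σ)_i = ∑_j ∂_j σ_{ij}` of a matrix field. -/
noncomputable def mdiv {d : ℕ}
    (σ : EuclideanSpace ℝ (Fin d) → Matrix (Fin d) (Fin d) ℝ)
    (x : EuclideanSpace ℝ (Fin d)) (i : Fin d) : ℝ :=
  ∑ j, pderiv' (fun y => σ y i j) x j

/-- Tensor product `a ⊗ b` as a `d×d` matrix. -/
def tens {d : ℕ} (a b : EuclideanSpace ℝ (Fin d)) : Matrix (Fin d) (Fin d) ℝ :=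
  Matrix.of fun i j => a i * b j

/-- Deviatoric part `M^d := M − (tr M / d)·I` of a `d×d` real matrix. -/
noncomputable def dev {d : ℕ} (M : Matrix (Fin d) (Fin d) ℝ) :
    Matrix (Fin d) (Fin d) ℝ :=
  M - (Matrix.trace M / (d : ℝ)) • (1 : Matrix (Fin d) (Fin d) ℝ)

section helpers
variable {d : ℕ}

lemma pderiv'_sub {f g : EuclideanSpace ℝ (Fin d) → ℝ} {x : EuclideanSpace ℝ (Fin d)}
    (hf : DifferentiableAt ℝ f x) (hg : DifferentiableAt ℝ g x) (j : Fin d) :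
    pderiv' (fun y => f y - g y) x j = pderiv' f x j - pderiv' g x j := by
  simp [pderiv', fderiv_fun_sub hf hg]

lemma pderiv'_mul {f g : EuclideanSpace ℝ (Fin d) → ℝ} {x : EuclideanSpace ℝ (Fin d)}
    (hf : DifferentiableAt ℝ f x) (hg : DifferentiableAt ℝ g x) (j : Fin d) :
    pderiv' (fun y => f y * g y) x j = pderiv' f x j * g x + f x * pderiv' g x j := by
  simp [pderiv', fderiv_fun_mul hf hg]; ring

lemma pderiv'_const_mul {f : EuclideanSpace ℝ (Fin d) → ℝ} {x : EuclideanSpace ℝ (Fin d)}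
    (hf : DifferentiableAt ℝ f x) (c : ℝ) (j : Fin d) :
    pderiv' (fun y => c * f y) x j = c * pderiv' f x j := by
  unfold pderiv'
  rw [fderiv_const_mul hf]
  simp

lemma pderiv'_mul_const {f : EuclideanSpace ℝ (Fin d) → ℝ} {x : EuclideanSpace ℝ (Fin d)}
    (hf : DifferentiableAt ℝ f x) (c : ℝ) (j : Fin d) :
    pderiv' (fun y => f y * c) x j = pderiv' f x j * c := by
  unfold pderiv'
  rw [fderiv_mul_const hf]
  simp [mul_comm]

lemma diffAt_comp {u : EuclideanSpace ℝ (Fin d) → EuclideanSpace ℝ (Fin d)}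
    {x : EuclideanSpace ℝ (Fin d)} (h : DifferentiableAt ℝ u x) (i : Fin d) :
    DifferentiableAt ℝ (fun y => u y i) x := by
  have := ((EuclideanSpace.proj (𝕜 := ℝ) i).differentiableAt).comp x h
  exact this

lemma contDiffAt_comp {u : EuclideanSpace ℝ (Fin d) → EuclideanSpace ℝ (Fin d)}
    {x : EuclideanSpace ℝ (Fin d)} (h : ContDiffAt ℝ 2 u x) (i : Fin d) :
    ContDiffAt ℝ 2 (fun y => u y i) x := by
  have := ((EuclideanSpace.proj (𝕜 := ℝ) i).contDiff.contDiffAt).comp x h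
  exact this

lemma diffAt_pderiv {f : EuclideanSpace ℝ (Fin d) → ℝ} {x : EuclideanSpace ℝ (Fin d)}
    (h : ContDiffAt ℝ 2 f x) (j : Fin d) :
    DifferentiableAt ℝ (fun y => pderiv' f y j) x := by
  have h1 : ContDiffAt ℝ 1 (fderiv ℝ f) x := h.fderiv_right (by norm_num)
  exact (h1.differentiableAt (by norm_num)).clm_apply (differentiableAt_const _)

end helpers

/-- Pointwise equivalence on an open set `Ω ⊆ ℝ^d` between the velocity–pressure
formulation of the stationary convective Brinkman–Forchheimer problem
`−νΔu + (Du)u + αu + F‖u‖^{r−2}u + ∇q = f`, `div u = 0`, and the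
pseudostress–velocity formulation `(1/ν)σ^d + (1/ν)(u⊗u)^d = Du`,
`αu + F‖u‖^{r−2}u − div σ = f`, where `σ := νDu − u⊗u − q·I`. -/
theorem CBF_formulations_equivalent {d : ℕ} (hd : 1 ≤ d)
    (Ω : Set (EuclideanSpace ℝ (Fin d))) (hΩ : IsOpen Ω)
    (ν α F r : ℝ) (hν : 0 < ν) (hα : 0 < α) (hF : 0 < F) (hr1 : 3 ≤ r) (hr2 : r ≤ 4)
    (f : EuclideanSpace ℝ (Fin d) → EuclideanSpace ℝ (Fin d))
    (u : EuclideanSpace ℝ (Fin d) → EuclideanSpace ℝ (Fin d))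
    (q : EuclideanSpace ℝ (Fin d) → ℝ)
    (hu : ContDiffOn ℝ 2 u Ω) (hq : ContDiffOn ℝ 1 q Ω)
    (σ : EuclideanSpace ℝ (Fin d) → Matrix (Fin d) (Fin d) ℝ)
    (hσ : ∀ x, σ x = ν • jac u x - tens (u x) (u x) -
        q x • (1 : Matrix (Fin d) (Fin d) ℝ)) :
    ((∀ x ∈ Ω, (∀ i, -ν * vlap u x i + (∑ j, jac u x i j * u x j) + α * u x i +
          F * ‖u x‖ ^ (r - 2) * u x i + pderiv' q x i = f x i) ∧ vdiv u x = 0) ↔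
      (∀ x ∈ Ω, ((1 / ν) • dev (σ x) + (1 / ν) • dev (tens (u x) (u x)) = jac u x) ∧
        ∀ i, α * u x i + F * ‖u x‖ ^ (r - 2) * u x i - mdiv σ x i = f x i)) := by
  have hd0 : (d : ℝ) ≠ 0 := Nat.cast_ne_zero.mpr (by omega)
  have hν0 : ν ≠ 0 := ne_of_gt hν
  set i₀ : Fin d := ⟨0, hd⟩ with hi₀
  -- key calculus lemma: formula for mdiv σ
  have key1 : ∀ x ∈ Ω, ∀ i, mdiv σ x i =
      ν * vlap u x i - ((∑ j, jac u x i j * u x j) + u x i * vdiv u x)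
        - pderiv' q x i := by
    intro x hx i
    have hux : ContDiffAt ℝ 2 u x := (hu x hx).contDiffAt (hΩ.mem_nhds hx)
    have hudiff : DifferentiableAt ℝ u x := hux.differentiableAt (by norm_num)
    have hui : ∀ k, DifferentiableAt ℝ (fun y => u y k) x := fun k => diffAt_comp hudiff k
    have hqx : DifferentiableAt ℝ q x :=
      (((hq x hx).contDiffAt (hΩ.mem_nhds hx)).differentiableAt (by norm_num))
    have hji : ∀ j, DifferentiableAt ℝ (fun y => pderiv' (fun z => u z i) y j) x :=
      fun j => diffAt_pderiv (contDiffAt_comp hux i) j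
    have step : ∀ j, pderiv' (fun y => σ y i j) x j =
        ν * pderiv' (fun y => pderiv' (fun z => u z i) y j) x j
        - (pderiv' (fun y => u y i) x j * u x j + u x i * pderiv' (fun y => u y j) x j)
        - pderiv' q x j * (1 : Matrix (Fin d) (Fin d) ℝ) i j := by
      intro j
      have hfn : (fun y => σ y i j) = fun y =>
          (ν * pderiv' (fun z => u z i) y j - u y i * u y j)
            - q y * (1 : Matrix (Fin d) (Fin d) ℝ) i j := by
        funext y
        rw [hσ y]
        simp [jac, tens, Matrix.sub_apply, Matrix.smul_apply, smul_eq_mul]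
      rw [hfn,
        pderiv'_sub (((hji j).const_mul ν).fun_sub ((hui i).fun_mul (hui j))) (hqx.mul_const _),
        pderiv'_sub ((hji j).const_mul ν) ((hui i).fun_mul (hui j)),
        pderiv'_const_mul (hji j), pderiv'_mul (hui i) (hui j),
        pderiv'_mul_const hqx]
    have hsum : mdiv σ x i = ∑ j,
        (ν * pderiv' (fun y => pderiv' (fun z => u z i) y j) x j
        - (pderiv' (fun y => u y i) x j * u x j + u x i * pderiv' (fun y => u y j) x j)
        - pderiv' q x j * (1 : Matrix (Fin d) (Fin d) ℝ) i j) := by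
      unfold mdiv
      exact Finset.sum_congr rfl fun j _ => step j
    rw [hsum, Finset.sum_sub_distrib, Finset.sum_sub_distrib, Finset.sum_add_distrib,
      ← Finset.mul_sum, ← Finset.mul_sum]
    have h1 : ∑ j, pderiv' q x j * (1 : Matrix (Fin d) (Fin d) ℝ) i j = pderiv' q x i := by
      simp [Matrix.one_apply, mul_ite]
    rw [h1]
    simp only [vlap, vdiv, jac, Matrix.of_apply]
  -- key algebra lemma: dev identity
  have key2 : ∀ x, (1 / ν) • dev (σ x) + (1 / ν) • dev (tens (u x) (u x)) =
      jac u x - (vdiv u x / (d : ℝ)) • (1 : Matrix (Fin d) (Fin d) ℝ) := by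
    intro x
    have htr : Matrix.trace (jac u x) = vdiv u x := by
      simp [Matrix.trace, Matrix.diag, jac, vdiv]
    ext i j
    by_cases hij : i = j <;>
      simp [dev, hσ, Matrix.trace_sub, Matrix.trace_smul, Matrix.trace_one,
        Fintype.card_fin, Matrix.sub_apply, Matrix.add_apply, Matrix.smul_apply,
        smul_eq_mul, htr, Matrix.one_apply, hij] <;>
      field_simp <;> ring
  have hCiff : ∀ x, ((1 / ν) • dev (σ x) + (1 / ν) • dev (tens (u x) (u x)) = jac u x)
      ↔ vdiv u x = 0 := by
    intro x
    rw [key2 x]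
    constructor
    · intro h
      have h0 := sub_eq_self.mp h
      have h1 := congrFun (congrFun h0 i₀) i₀
      simp [Matrix.smul_apply, Matrix.one_apply_eq, smul_eq_mul] at h1
      rcases h1 with h1 | h1
      · exact h1
      · exact absurd h1 (by omega)
    · intro h
      rw [h]
      simp
  constructor
  · intro h x hx
    obtain ⟨hA, hB⟩ := h x hx
    refine ⟨(hCiff x).mpr hB, fun i => ?_⟩
    have := hA i
    rw [key1 x hx i, hB]
    linarith
  · intro h x hx
    obtain ⟨hC, hD⟩ := h x hx
    have hB := (hCiff x).mp hC
    refine ⟨fun i => ?_, hB⟩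
    have := hD i
    rw [key1 x hx i, hB] at this
    linarith
end

section
/- Let ν, α, c₁, c₂ be positive real numbers, let κ₁ ∈ (0, 2ν) and κ₂ > 0, and define α₀ := min{(1/ν)(1 − κ₁/(2ν)), 1/(2α)}, α₁ := min{α₀·c₁, 1/(2α)}, α₂ := c₂·min{κ₁/2, κ₂}, and α_A := min{α₁, α₂}. Then α_A > 0, and for all nonnegative real numbers a, m, n, g, s, v satisfying a² + m² ≥ c₁·n² and g² + s² ≥ c₂·v², there holds (1/ν)·a² + (1/α)·m² + κ₁·g² + κ₂·s² − (κ₁/ν)·a·g ≥ α_A·(n² + m² + v²). -/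
/-- Core real-variable inequality behind the ellipticity of the augmented bilinear
form: with `κ₁ ∈ (0, 2ν)`, `κ₂ > 0` and the constants `α₀, α₁, α₂, α_A` defined as
stated, `α_A > 0` and for all nonnegative `a, m, n, g, s, v` with `c₁ n² ≤ a² + m²`
and `c₂ v² ≤ g² + s²` there holds
`(1/ν)a² + (1/α)m² + κ₁g² + κ₂s² − (κ₁/ν)ag ≥ α_A (n² + m² + v²)`. -/
theorem augmented_form_ellipticity
    (ν α c₁ c₂ κ₁ κ₂ : ℝ) (hν : 0 < ν) (hα : 0 < α)
    (hc₁ : 0 < c₁) (hc₂ : 0 < c₂)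
    (hκ₁ : 0 < κ₁) (hκ₁' : κ₁ < 2 * ν) (hκ₂ : 0 < κ₂)
    (α₀ α₁ α₂ αA : ℝ)
    (hα₀ : α₀ = min ((1 / ν) * (1 - κ₁ / (2 * ν))) (1 / (2 * α)))
    (hα₁ : α₁ = min (α₀ * c₁) (1 / (2 * α)))
    (hα₂ : α₂ = c₂ * min (κ₁ / 2) κ₂)
    (hαA : αA = min α₁ α₂) :
    0 < αA ∧
      ∀ a m n g s v : ℝ, 0 ≤ a → 0 ≤ m → 0 ≤ n → 0 ≤ g → 0 ≤ s → 0 ≤ v →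
        c₁ * n ^ 2 ≤ a ^ 2 + m ^ 2 → c₂ * v ^ 2 ≤ g ^ 2 + s ^ 2 →
        αA * (n ^ 2 + m ^ 2 + v ^ 2) ≤
          (1 / ν) * a ^ 2 + (1 / α) * m ^ 2 + κ₁ * g ^ 2 + κ₂ * s ^ 2 -
            (κ₁ / ν) * a * g := by
  have hν' : (0:ℝ) < 2 * ν := by linarith
  have hα₀pos : 0 < α₀ := by
    rw [hα₀]
    apply lt_min
    · apply mul_pos (by positivity)
      have : κ₁ / (2 * ν) < 1 := (div_lt_one hν').mpr hκ₁'
      linarith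
    · positivity
  have hα₁pos : 0 < α₁ := by
    rw [hα₁]; exact lt_min (by positivity) (by positivity)
  have hα₂pos : 0 < α₂ := by
    rw [hα₂]; exact mul_pos hc₂ (lt_min (by positivity) hκ₂)
  have hαApos : 0 < αA := by rw [hαA]; exact lt_min hα₁pos hα₂pos
  refine ⟨hαApos, ?_⟩
  intro a m n g s v ha hm hn hg hs hv h1 h2
  -- key bounds on the constants
  have hA1 : αA ≤ α₀ * c₁ := hαA ▸ (min_le_left _ _).trans (hα₁ ▸ min_le_left _ _)
  have hA2 : αA ≤ 1 / (2 * α) := hαA ▸ (min_le_left _ _).trans (hα₁ ▸ min_le_right _ _)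
  have hA3 : αA ≤ α₂ := hαA ▸ min_le_right _ _
  have h0a : α₀ ≤ (1 / ν) * (1 - κ₁ / (2 * ν)) := hα₀ ▸ min_le_left _ _
  have h0b : α₀ ≤ 1 / (2 * α) := hα₀ ▸ min_le_right _ _
  have hm1 : min (κ₁ / 2) κ₂ ≤ κ₁ / 2 := min_le_left _ _
  have hm2 : min (κ₁ / 2) κ₂ ≤ κ₂ := min_le_right _ _
  set μ := min (κ₁ / 2) κ₂ with hμ
  have hμpos : 0 < μ := lt_min (by positivity) hκ₂
  -- Young's inequality piece
  have hYoung : (κ₁ / ν) * a * g ≤ (κ₁ / (2 * ν ^ 2)) * a ^ 2 + (κ₁ / 2) * g ^ 2 := by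
    have e1 : (κ₁ / ν) * a * g = κ₁ * (a / ν) * g := by ring
    have e2 : (κ₁ / (2 * ν ^ 2)) * a ^ 2 = (κ₁ / 2) * (a / ν) ^ 2 := by
      field_simp
    rw [e1, e2]
    nlinarith [mul_nonneg hκ₁.le (sq_nonneg (a / ν - g))]
  -- step 1: n² bound
  have s1 : αA * n ^ 2 ≤ α₀ * (a ^ 2 + m ^ 2) := by
    calc αA * n ^ 2 ≤ (α₀ * c₁) * n ^ 2 :=
          mul_le_mul_of_nonneg_right hA1 (sq_nonneg n)
    _ = α₀ * (c₁ * n ^ 2) := by ring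
    _ ≤ α₀ * (a ^ 2 + m ^ 2) := mul_le_mul_of_nonneg_left h1 hα₀pos.le
  have s2 : α₀ * a ^ 2 ≤ ((1 / ν) * (1 - κ₁ / (2 * ν))) * a ^ 2 :=
    mul_le_mul_of_nonneg_right h0a (sq_nonneg a)
  have s3 : α₀ * m ^ 2 ≤ (1 / (2 * α)) * m ^ 2 :=
    mul_le_mul_of_nonneg_right h0b (sq_nonneg m)
  have s4 : αA * m ^ 2 ≤ (1 / (2 * α)) * m ^ 2 :=
    mul_le_mul_of_nonneg_right hA2 (sq_nonneg m)
  -- step 2: v² bound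
  have s5 : αA * v ^ 2 ≤ μ * (g ^ 2 + s ^ 2) := by
    calc αA * v ^ 2 ≤ (c₂ * μ) * v ^ 2 :=
          mul_le_mul_of_nonneg_right (hα₂ ▸ hA3) (sq_nonneg v)
    _ = μ * (c₂ * v ^ 2) := by ring
    _ ≤ μ * (g ^ 2 + s ^ 2) := mul_le_mul_of_nonneg_left h2 hμpos.le
  have s6 : μ * g ^ 2 ≤ (κ₁ / 2) * g ^ 2 :=
    mul_le_mul_of_nonneg_right hm1 (sq_nonneg g)
  have s7 : μ * s ^ 2 ≤ κ₂ * s ^ 2 := mul_le_mul_of_nonneg_right hm2 (sq_nonneg s)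
  -- combine: (1/ν)(1-κ₁/(2ν)) = 1/ν - κ₁/(2ν²)
  have hida : ((1 / ν) * (1 - κ₁ / (2 * ν))) * a ^ 2
      = (1 / ν) * a ^ 2 - (κ₁ / (2 * ν ^ 2)) * a ^ 2 := by
    field_simp
  have h2α : (1 / (2 * α)) * m ^ 2 + (1 / (2 * α)) * m ^ 2 = (1 / α) * m ^ 2 := by
    field_simp; ring
  have hsplit : αA * (n ^ 2 + m ^ 2 + v ^ 2)
      = αA * n ^ 2 + αA * m ^ 2 + αA * v ^ 2 := by ring
  have hμsplit : μ * (g ^ 2 + s ^ 2) = μ * g ^ 2 + μ * s ^ 2 := by ring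
  have hα₀split : α₀ * (a ^ 2 + m ^ 2) = α₀ * a ^ 2 + α₀ * m ^ 2 := by ring
  linarith [s1, s2, s3, s4, s5, s6, s7, hYoung]
end
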